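/- For all real Euler angles α₁,β₁,γ₁,α₂,β₂,γ₂, the measurement-assisted transition probability satisfies P_{1→2}^{(1)}(U(α₁,β₁,γ₁), U(α₂,β₂,γ₂)) = L₁(α₁+γ₂, β₁, β₂); in particular it depends only on the three kinematic parameters Ω = α₁+γ₂, β₁ and β₂. -/

import Mathlib

open Matrix

/-- Measurement-assisted transition probability `P_{1→k}^{(j)}`:
indices are 0-based, so state `|1⟩` is index `0`, state `|2⟩` is index `1`,
state `|3⟩` is index `2`.  Here `ρ = U₁|1⟩⟨1|U₁†`, `P = |j⟩⟨j|`, and the value is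
`⟨k| U₂ (P ρ P + (I−P) ρ (I−P)) U₂† |k⟩` (a real number). -/
noncomputable def measProb (j k : Fin 3) (U₁ U₂ : Matrix (Fin 3) (Fin 3) ℂ) : ℝ :=
  let ρ : Matrix (Fin 3) (Fin 3) ℂ := U₁ * Matrix.single 0 0 1 * U₁ᴴ
  let P : Matrix (Fin 3) (Fin 3) ℂ := Matrix.single j j 1
  ((U₂ * (P * ρ * P + (1 - P) * ρ * (1 - P)) * U₂ᴴ) k k).re

/-- The Wigner matrix `U(α,β,γ)` of the spin-1 `ZYZ` Euler parameterization. -/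
noncomputable def Umat (α β γ : ℝ) : Matrix (Fin 3) (Fin 3) ℂ :=
  !![Complex.exp (-Complex.I * (↑α + ↑γ)) * (Real.cos (β/2) : ℂ)^2,
       -(Complex.exp (-Complex.I * ↑α) / (Real.sqrt 2 : ℂ)) * (Real.sin β : ℂ),
       Complex.exp (-Complex.I * (↑α - ↑γ)) * (Real.sin (β/2) : ℂ)^2;
     (Complex.exp (-Complex.I * ↑γ) / (Real.sqrt 2 : ℂ)) * (Real.sin β : ℂ),
       (Real.cos β : ℂ),
       -(Complex.exp (Complex.I * ↑γ) / (Real.sqrt 2 : ℂ)) * (Real.sin β : ℂ);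
     Complex.exp (Complex.I * (↑α - ↑γ)) * (Real.sin (β/2) : ℂ)^2,
       (Complex.exp (Complex.I * ↑α) / (Real.sqrt 2 : ℂ)) * (Real.sin β : ℂ),
       Complex.exp (Complex.I * (↑α + ↑γ)) * (Real.cos (β/2) : ℂ)^2]

/-- The kinematic landscape function `L₁(Ω,β₁,β₂)`. -/
noncomputable def L1 (Ω β₁ β₂ : ℝ) : ℝ :=
  (1/8) * Real.sin β₂ ^ 2 * (3 + Real.cos (2*β₁))
  + (1/2) * Real.sin β₁ ^ 2 * Real.cos β₂ ^ 2
  - (1/2) * Real.cos Ω * Real.sin β₁ * Real.sin (β₁/2) ^ 2 * Real.sin (2*β₂)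

/-- `P_{1→2}^{(1)}(U(α₁,β₁,γ₁), U(α₂,β₂,γ₂)) = L₁(α₁+γ₂, β₁, β₂)`,
so the transition probability depends only on `Ω = α₁+γ₂`, `β₁` and `β₂`.
(0-based indices: `j = 0` is state `|1⟩`, `k = 1` is state `|2⟩`.) -/
theorem stmt4 (α₁ β₁ γ₁ α₂ β₂ γ₂ : ℝ) :
    measProb 0 1 (Umat α₁ β₁ γ₁) (Umat α₂ β₂ γ₂) = L1 (α₁ + γ₂) β₁ β₂ := by
  simp only [measProb, Umat, L1, Matrix.mul_apply, Matrix.add_apply, Matrix.sub_apply,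
    Matrix.one_apply, Matrix.conjTranspose_apply, Fin.sum_univ_three,
    Matrix.single, Matrix.of_apply, Matrix.cons_val', Matrix.cons_val_zero,
    Matrix.cons_val_one, Matrix.head_cons, Matrix.empty_val', Matrix.cons_val_fin_one,
    Matrix.head_fin_const, Matrix.cons_val_two, Matrix.tail_cons,
    show ((0:Fin 3) = 2) ↔ False by decide, show ((0:Fin 3) = 1) ↔ False by decide,
    show ((1:Fin 3) = 0) ↔ False by decide, show ((1:Fin 3) = 2) ↔ False by decide,
    show ((2:Fin 3) = 0) ↔ False by decide, show ((2:Fin 3) = 1) ↔ False by decide,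
    show ((0:Fin 3) = 0) ↔ True by decide, show ((1:Fin 3) = 1) ↔ True by decide,
    show ((2:Fin 3) = 2) ↔ True by decide, if_true, if_false, true_and, false_and,
    and_true, and_false, and_self]
  norm_num [Complex.exp_re, Complex.exp_im, Complex.add_re, Complex.add_im,
    Complex.mul_re, Complex.mul_im, Complex.sub_re, Complex.sub_im, Complex.div_re, Complex.div_im,
    Complex.normSq, Complex.I_re, Complex.I_im, Complex.ofReal_re, Complex.ofReal_im,
    Complex.neg_re, Complex.neg_im, Complex.one_re, Complex.one_im, Complex.zero_re, Complex.zero_im,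
    Complex.cos_ofReal_re, Complex.cos_ofReal_im, Complex.sin_ofReal_re, Complex.sin_ofReal_im,
    Real.exp_zero, Real.cos_neg, Real.sin_neg,
    ← Complex.ofReal_cos, ← Complex.ofReal_sin, ← Complex.ofReal_pow, Complex.conj_ofReal]
  have h1 : Real.sin β₁ = 2 * Real.sin (β₁/2) * Real.cos (β₁/2) := by
    rw [← Real.sin_two_mul]; congr 1; ring
  have h2 : Real.cos (2*β₁)
      = (Real.cos (β₁/2)^2 - Real.sin (β₁/2)^2)^2 - (2 * Real.sin (β₁/2) * Real.cos (β₁/2))^2 := by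
    rw [show 2*β₁ = 2*(2*(β₁/2)) by ring, Real.cos_two_mul, Real.cos_two_mul]
    linear_combination (7*Real.cos (β₁/2)^2 - Real.sin (β₁/2)^2 - 1) * (Real.sin_sq_add_cos_sq (β₁/2))
  simp only [Real.cos_add, Real.sin_add, Real.cos_sub, Real.sin_sub, Real.cos_neg, Real.sin_neg,
    Real.sin_two_mul, h1, h2]
  linear_combination
    ((-1/8 : ℝ) * Real.sin β₂ ^ 2 + (7/8 : ℝ) * Real.sin (β₁/2) ^ 2 * Real.sin β₂ ^ 2 + (-2 : ℝ) * Real.sin (β₁/2) ^ 2 * Real.cos β₂ ^ 2 + (-1/8 : ℝ) * Real.cos (β₁/2) ^ 2 * Real.sin β₂ ^ 2 + Real.sin γ₁ ^ 2 * Real.sin (β₁/2) ^ 2 * Real.cos β₂ ^ 2 * Real.sqrt 2 ^ 2 + Real.cos γ₁ ^ 2 * Real.sin (β₁/2) ^ 2 * Real.cos β₂ ^ 2 * Real.sqrt 2 ^ 2 + (1/4 : ℝ) * Real.sin γ₂ ^ 2 * Real.sin γ₁ ^ 2 * Real.sin α₁ ^ 2 * Real.sin β₂ ^ 2 * Real.sqrt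 2 ^ 2 + (-1/4 : ℝ) * Real.sin γ₂ ^ 2 * Real.sin γ₁ ^ 2 * Real.sin α₁ ^ 2 * Real.sin (β₁/2) ^ 2 * Real.sin β₂ ^ 2 * Real.sqrt 2 ^ 2 + (1/4 : ℝ) * Real.sin γ₂ ^ 2 * Real.sin γ₁ ^ 2 * Real.sin α₁ ^ 2 * Real.cos (β₁/2) ^ 2 * Real.sin β₂ ^ 2 * Real.sqrt 2 ^ 2 + (1/4 : ℝ) * Real.sin γ₂ ^ 2 * Real.sin γ₁ ^ 2 * Real.cos α₁ ^ 2 * Real.sin β₂ ^ 2 * Real.sqrt 2 ^ 2 + (-1/4 : ℝ) * Real.sin γ₂ ^ 2 * Real.sin γ₁ ^ 2 * Real.cos α₁ ^ 2 * Real.sin (β₁/2) ^ 2 * Real.sin β₂ ^ 2 * Real.sqrt 2 ^ 2 + (1/4 : ℝ) * Real.sin γ₂ ^ 2 * Real.sin γ₁ ^ 2 * Real.cos α₁ ^ 2 * Real.cos (β₁/2) ^ 2 * Real.sin β₂ ^ 2 * Real.sqrt 2 ^ 2 + (1/4 : ℝ) * Real.sin γ₂ ^ 2 * Real.cos γ₁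 ^ 2 * Real.sin α₁ ^ 2 * Real.sin β₂ ^ 2 * Real.sqrt 2 ^ 2 + (-1/4 : ℝ) * Real.sin γ₂ ^ 2 * Real.cos γ₁ ^ 2 * Real.sin α₁ ^ 2 * Real.sin (β₁/2) ^ 2 * Real.sin β₂ ^ 2 * Real.sqrt 2 ^ 2 + (1/4 : ℝ) * Real.sin γ₂ ^ 2 * Real.cos γ₁ ^ 2 * Real.sin α₁ ^ 2 * Real.cos (β₁/2) ^ 2 * Real.sin β₂ ^ 2 * Real.sqrt 2 ^ 2 + (1/4 : ℝ) * Real.sin γ₂ ^ 2 * Real.cos γ₁ ^ 2 * Real.cos α₁ ^ 2 * Real.sin β₂ ^ 2 * Real.sqrt 2 ^ 2 + (-1/4 : ℝ) * Real.sin γ₂ ^ 2 * Real.cos γ₁ ^ 2 * Real.cos α₁ ^ 2 * Real.sin (β₁/2) ^ 2 * Real.sin β₂ ^ 2 * Real.sqrt 2 ^ 2 + (1/4 : ℝ) * Real.sin γ₂ ^ 2 * Real.cos γ₁ ^ 2 * Real.cos α₁ ^ 2 * Real.cos (β₁/2) ^ 2 * Real.sin β₂ ^ 2 * Real.sqrt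 2 ^ 2 + (1/4 : ℝ) * Real.cos γ₂ ^ 2 * Real.sin γ₁ ^ 2 * Real.sin α₁ ^ 2 * Real.sin β₂ ^ 2 * Real.sqrt 2 ^ 2 + (-1/4 : ℝ) * Real.cos γ₂ ^ 2 * Real.sin γ₁ ^ 2 * Real.sin α₁ ^ 2 * Real.sin (β₁/2) ^ 2 * Real.sin β₂ ^ 2 * Real.sqrt 2 ^ 2 + (1/4 : ℝ) * Real.cos γ₂ ^ 2 * Real.sin γ₁ ^ 2 * Real.sin α₁ ^ 2 * Real.cos (β₁/2) ^ 2 * Real.sin β₂ ^ 2 * Real.sqrt 2 ^ 2 + (1/4 : ℝ) * Real.cos γ₂ ^ 2 * Real.sin γ₁ ^ 2 * Real.cos α₁ ^ 2 * Real.sin β₂ ^ 2 * Real.sqrt 2 ^ 2 + (-1/4 : ℝ) * Real.cos γ₂ ^ 2 * Real.sin γ₁ ^ 2 * Real.cos α₁ ^ 2 * Real.sin (β₁/2) ^ 2 * Real.sin β₂ ^ 2 * Real.sqrt 2 ^ 2 + (1/4 : ℝ) * Real.cos γ₂ ^ 2 * Real.sin γ₁ ^ 2 * Real.cos α₁ ^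 2 * Real.cos (β₁/2) ^ 2 * Real.sin β₂ ^ 2 * Real.sqrt 2 ^ 2 + (1/4 : ℝ) * Real.cos γ₂ ^ 2 * Real.cos γ₁ ^ 2 * Real.sin α₁ ^ 2 * Real.sin β₂ ^ 2 * Real.sqrt 2 ^ 2 + (-1/4 : ℝ) * Real.cos γ₂ ^ 2 * Real.cos γ₁ ^ 2 * Real.sin α₁ ^ 2 * Real.sin (β₁/2) ^ 2 * Real.sin β₂ ^ 2 * Real.sqrt 2 ^ 2 + (1/4 : ℝ) * Real.cos γ₂ ^ 2 * Real.cos γ₁ ^ 2 * Real.sin α₁ ^ 2 * Real.cos (β₁/2) ^ 2 * Real.sin β₂ ^ 2 * Real.sqrt 2 ^ 2 + (1/4 : ℝ) * Real.cos γ₂ ^ 2 * Real.cos γ₁ ^ 2 * Real.cos α₁ ^ 2 * Real.sin β₂ ^ 2 * Real.sqrt 2 ^ 2 + (-1/4 : ℝ) * Real.cos γ₂ ^ 2 * Real.cos γ₁ ^ 2 * Real.cos α₁ ^ 2 * Real.sin (β₁/2) ^ 2 * Real.sin β₂ ^ 2 * Real.sqrt 2 ^ 2 + (1/4 : ℝ)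 * Real.cos γ₂ ^ 2 * Real.cos γ₁ ^ 2 * Real.cos α₁ ^ 2 * Real.cos (β₁/2) ^ 2 * Real.sin β₂ ^ 2 * Real.sqrt 2 ^ 2) * (Real.sin_sq_add_cos_sq (β₁/2))
    + ((1/4 : ℝ) * Real.sin γ₂ ^ 2 * Real.sin γ₁ ^ 2 * Real.sin β₂ ^ 2 * Real.sqrt 2 ^ 2 + (-1/2 : ℝ) * Real.sin γ₂ ^ 2 * Real.sin γ₁ ^ 2 * Real.sin (β₁/2) ^ 2 * Real.sin β₂ ^ 2 * Real.sqrt 2 ^ 2 + (1/2 : ℝ) * Real.sin γ₂ ^ 2 * Real.sin γ₁ ^ 2 * Real.sin (β₁/2) ^ 4 * Real.sin β₂ ^ 2 * Real.sqrt 2 ^ 2 + (1/4 : ℝ) * Real.sin γ₂ ^ 2 * Real.cos γ₁ ^ 2 * Real.sin β₂ ^ 2 * Real.sqrt 2 ^ 2 + (-1/2 : ℝ) * Real.sin γ₂ ^ 2 * Real.cos γ₁ ^ 2 * Real.sin (β₁/2) ^ 2 * Real.sin β₂ ^ 2 * Real.sqrt 2 ^ 2 + (1/2 : ℝ) * Real.sin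 γ₂ ^ 2 * Real.cos γ₁ ^ 2 * Real.sin (β₁/2) ^ 4 * Real.sin β₂ ^ 2 * Real.sqrt 2 ^ 2 + (1/4 : ℝ) * Real.cos γ₂ ^ 2 * Real.sin γ₁ ^ 2 * Real.sin β₂ ^ 2 * Real.sqrt 2 ^ 2 + (-1/2 : ℝ) * Real.cos γ₂ ^ 2 * Real.sin γ₁ ^ 2 * Real.sin (β₁/2) ^ 2 * Real.sin β₂ ^ 2 * Real.sqrt 2 ^ 2 + (1/2 : ℝ) * Real.cos γ₂ ^ 2 * Real.sin γ₁ ^ 2 * Real.sin (β₁/2) ^ 4 * Real.sin β₂ ^ 2 * Real.sqrt 2 ^ 2 + (1/4 : ℝ) * Real.cos γ₂ ^ 2 * Real.cos γ₁ ^ 2 * Real.sin β₂ ^ 2 * Real.sqrt 2 ^ 2 + (-1/2 : ℝ) * Real.cos γ₂ ^ 2 * Real.cos γ₁ ^ 2 * Real.sin (β₁/2) ^ 2 * Real.sin β₂ ^ 2 * Real.sqrt 2 ^ 2 + (1/2 : ℝ) * Real.cos γ₂ ^ 2 * Real.cos γ₁ ^ 2 * Real.sin (β₁/2) ^ 4 *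 Real.sin β₂ ^ 2 * Real.sqrt 2 ^ 2) * (Real.sin_sq_add_cos_sq α₁)
    + (Real.sin (β₁/2) ^ 2 * Real.cos β₂ ^ 2 * Real.sqrt 2 ^ 2 + (-1 : ℝ) * Real.sin (β₁/2) ^ 4 * Real.cos β₂ ^ 2 * Real.sqrt 2 ^ 2 + Real.sin γ₂ * Real.sin α₁ * Real.cos (β₁/2) * Real.sin (β₁/2) ^ 3 * Real.cos β₂ * Real.sin β₂ * Real.sqrt 2 ^ 2 + (1/4 : ℝ) * Real.sin γ₂ ^ 2 * Real.sin β₂ ^ 2 * Real.sqrt 2 ^ 2 + (-1/2 : ℝ) * Real.sin γ₂ ^ 2 * Real.sin (β₁/2) ^ 2 * Real.sin β₂ ^ 2 * Real.sqrt 2 ^ 2 + (1/2 : ℝ) * Real.sin γ₂ ^ 2 * Real.sin (β₁/2) ^ 4 * Real.sin β₂ ^ 2 * Real.sqrt 2 ^ 2 + (-1 : ℝ) * Real.cos γ₂ * Real.cos α₁ * Real.cos (β₁/2) * Real.sin (β₁/2) ^ 3 * Real.cos β₂ * Real.sin β₂ * Real.sqrt 2 ^ 2 + (1/4 : ℝ)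 * Real.cos γ₂ ^ 2 * Real.sin β₂ ^ 2 * Real.sqrt 2 ^ 2 + (-1/2 : ℝ) * Real.cos γ₂ ^ 2 * Real.sin (β₁/2) ^ 2 * Real.sin β₂ ^ 2 * Real.sqrt 2 ^ 2 + (1/2 : ℝ) * Real.cos γ₂ ^ 2 * Real.sin (β₁/2) ^ 4 * Real.sin β₂ ^ 2 * Real.sqrt 2 ^ 2) * (Real.sin_sq_add_cos_sq γ₁)
    + ((1/4 : ℝ) * Real.sin β₂ ^ 2 * Real.sqrt 2 ^ 2 + (-1/2 : ℝ) * Real.sin (β₁/2) ^ 2 * Real.sin β₂ ^ 2 * Real.sqrt 2 ^ 2 + (1/2 : ℝ) * Real.sin (β₁/2) ^ 4 * Real.sin β₂ ^ 2 * Real.sqrt 2 ^ 2) * (Real.sin_sq_add_cos_sq γ₂)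
    + ((-2 : ℝ) * Real.sin (β₁/2) ^ 2 + Real.sin (β₁/2) ^ 2 * Real.sqrt 2 ^ 2 + (2 : ℝ) * Real.sin (β₁/2) ^ 4 + (-1 : ℝ) * Real.sin (β₁/2) ^ 4 * Real.sqrt 2 ^ 2) * (Real.sin_sq_add_cos_sq β₂)
    + ((1/4 : ℝ) * Real.sin β₂ ^ 2 + Real.sin (β₁/2) ^ 2 + (-3/2 : ℝ) * Real.sin (β₁/2) ^ 2 * Real.sin β₂ ^ 2 + (-1 : ℝ) * Real.sin (β₁/2) ^ 4 + (3/2 : ℝ) * Real.sin (β₁/2) ^ 4 * Real.sin β₂ ^ 2 + Real.sin γ₂ * Real.sin α₁ * Real.cos (β₁/2) * Real.sin (β₁/2) ^ 3 * Real.cos β₂ * Real.sin β₂ + (-1 : ℝ) * Real.cos γ₂ * Real.cos α₁ * Real.cos (β₁/2) * Real.sin (β₁/2) ^ 3 * Real.cos β₂ * Real.sin β₂) * (Real.sq_sqrt (by norm_num : (0:ℝ) ≤ 2))
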